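/- arXiv:1908.08895 — 4 statements merged into one kernel-verified Lean document; each statement's English description precedes it below -/
import Mathlib

section
/- Let k be a field and R = k⟦t⟧. The ring A = k⟦x,y⟧/(xy), viewed as an R-algebra via t ↦ x + y, is a free R-module of rank 2 with basis {1, x}. -/
/-- The ideal `(xy)` of `k⟦x,y⟧`. -/
noncomputable def nodalIdeal (k : Type) [Field k] : Ideal (MvPowerSeries (Fin 2) k) :=
  Ideal.span {(MvPowerSeries.X (0 : Fin 2) : MvPowerSeries (Fin 2) k) *
    MvPowerSeries.X (1 : Fin 2)}

/-- The nodal curve singularity `k⟦x,y⟧/(xy)`. -/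
abbrev Nodal (k : Type) [Field k] : Type :=
  MvPowerSeries (Fin 2) k ⧸ nodalIdeal k

noncomputable def nodalX (k : Type) [Field k] (j : Fin 2) : Nodal k :=
  Ideal.Quotient.mk (nodalIdeal k) (MvPowerSeries.X j)

open MvPowerSeries Finsupp
set_option maxHeartbeats 1000000

section Aux
variable {k : Type} [Field k]

lemma fin2_eq_iff (e e' : Fin 2 →₀ ℕ) : e = e' ↔ e 0 = e' 0 ∧ e 1 = e' 1 := by
  constructor
  · rintro rfl; exact ⟨rfl, rfl⟩
  · rintro ⟨h0, h1⟩; ext j; fin_cases j <;> assumption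

lemma fin2_le_iff (e e' : Fin 2 →₀ ℕ) : e ≤ e' ↔ e 0 ≤ e' 0 ∧ e 1 ≤ e' 1 := by
  constructor
  · intro h; exact ⟨h 0, h 1⟩
  · rintro ⟨h0, h1⟩ j; fin_cases j <;> assumption

/-- the exponent of `xy` -/
noncomputable def dd : Fin 2 →₀ ℕ := Finsupp.single 0 1 + Finsupp.single 1 1

lemma dd_apply0 : dd 0 = 1 := by simp [dd]
lemma dd_apply1 : dd 1 = 1 := by simp [dd]

lemma X_mul_X : (MvPowerSeries.X (0 : Fin 2) : MvPowerSeries (Fin 2) k) * MvPowerSeries.X 1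
    = MvPowerSeries.monomial dd 1 := by
  rw [MvPowerSeries.X, MvPowerSeries.X, MvPowerSeries.monomial_mul_monomial, one_mul, dd]

lemma mem_nodalIdeal_iff (F : MvPowerSeries (Fin 2) k) :
    F ∈ nodalIdeal k ↔
      ∀ n : ℕ, MvPowerSeries.coeff (Finsupp.single 0 n) F = 0 ∧
        MvPowerSeries.coeff (Finsupp.single 1 n) F = 0 := by
  rw [nodalIdeal, Ideal.mem_span_singleton']
  constructor
  · rintro ⟨a, rfl⟩ n
    rw [X_mul_X]
    constructor <;>
    · rw [MvPowerSeries.coeff_mul_monomial, if_neg]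
      rw [fin2_le_iff]
      simp [dd_apply0, dd_apply1]
  · intro h
    refine ⟨@id (MvPowerSeries (Fin 2) k) (fun e => MvPowerSeries.coeff (e + dd) F), ?_⟩
    rw [X_mul_X]
    ext e
    rw [MvPowerSeries.coeff_mul_monomial]
    split_ifs with hle
    · rw [mul_one]
      exact congrArg (fun d => MvPowerSeries.coeff d F) (tsub_add_cancel_of_le hle)
    · rw [fin2_le_iff, dd_apply0, dd_apply1] at hle
      push_neg at hle
      have hc : e 0 = 0 ∨ e 1 = 0 := by
        by_cases h0 : 1 ≤ e 0
        · right; have := hle h0; omega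
        · left; omega
      rcases hc with h0 | h1
      · have he : e = Finsupp.single 1 (e 1) := by
          rw [fin2_eq_iff]; simp [h0]
        rw [he]; exact ((h _).2).symm
      · have he : e = Finsupp.single 0 (e 0) := by
          rw [fin2_eq_iff]; simp [h1]
        rw [he]; exact ((h _).1).symm

/-- coefficientwise lift of a power series `p` to `p(x) + p(y) - p(0)` in `k⟦x,y⟧`. -/
noncomputable def Lser (p : PowerSeries k) : MvPowerSeries (Fin 2) k :=
  fun e => if e 1 = 0 then PowerSeries.coeff (e 0) p
    else if e 0 = 0 then PowerSeries.coeff (e 1) p else 0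

lemma coeff_Lser (p : PowerSeries k) (e : Fin 2 →₀ ℕ) :
    MvPowerSeries.coeff e (Lser p) =
      if e 1 = 0 then PowerSeries.coeff (e 0) p
        else if e 0 = 0 then PowerSeries.coeff (e 1) p else 0 := rfl

lemma Lser_single (p : PowerSeries k) (i : Fin 2) (n : ℕ) :
    MvPowerSeries.coeff (Finsupp.single i n) (Lser p) = PowerSeries.coeff n p := by
  rw [coeff_Lser]
  fin_cases i
  · simp
  · rcases Nat.eq_zero_or_pos n with rfl | hn
    · simp
    · rw [if_neg (by simp; omega), if_pos (by simp)]
      simp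

lemma Lser_add (p q : PowerSeries k) : Lser (p + q) = Lser p + Lser q := by
  ext e
  rw [map_add, coeff_Lser, coeff_Lser, coeff_Lser, map_add]
  split_ifs <;> simp

lemma Lser_zero : Lser (0 : PowerSeries k) = 0 := by
  ext e
  rw [coeff_Lser]
  split_ifs <;> simp

lemma Lser_C (c : k) : Lser (PowerSeries.C c) = (MvPowerSeries.C c : MvPowerSeries (Fin 2) k) := by
  ext e
  rw [coeff_Lser, MvPowerSeries.coeff_C]
  simp only [show (e = 0) ↔ (e 0 = 0 ∧ e 1 = 0) by rw [fin2_eq_iff]; simp]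
  split_ifs <;> simp_all [PowerSeries.coeff_C]

lemma Lser_one : Lser (1 : PowerSeries k) = 1 := by
  have := Lser_C (1 : k); rwa [map_one, map_one] at this

lemma Lser_X : Lser (PowerSeries.X : PowerSeries k)
    = MvPowerSeries.X 0 + MvPowerSeries.X 1 := by
  ext e
  rw [map_add, coeff_Lser, MvPowerSeries.coeff_X, MvPowerSeries.coeff_X]
  simp only [show (e = Finsupp.single (0:Fin 2) 1) ↔ (e 0 = 1 ∧ e 1 = 0) by rw [fin2_eq_iff]; simp,
    show (e = Finsupp.single (1:Fin 2) 1) ↔ (e 0 = 0 ∧ e 1 = 1) by rw [fin2_eq_iff]; simp]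
  split_ifs <;> simp_all [PowerSeries.coeff_X]

lemma Lser_mul_axis (p q : PowerSeries k) (i : Fin 2) (n : ℕ) :
    MvPowerSeries.coeff (Finsupp.single i n) (Lser p * Lser q)
      = PowerSeries.coeff n (p * q) := by
  rw [MvPowerSeries.coeff_mul, Finsupp.antidiagonal_single, Finset.sum_map,
    PowerSeries.coeff_mul]
  refine Finset.sum_congr rfl fun ab hab => ?_
  obtain ⟨a, b⟩ := ab
  simp only [Function.Embedding.coe_prodMap, Function.Embedding.coeFn_mk, Prod.map_apply]
  rw [Lser_single, Lser_single]

lemma coeff_mul_X0_add (q : PowerSeries k) (n : ℕ) :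
    MvPowerSeries.coeff (Finsupp.single 0 (n + 1)) (Lser q * MvPowerSeries.X (0 : Fin 2))
      = PowerSeries.coeff n q := by
  rw [MvPowerSeries.X, MvPowerSeries.coeff_mul_monomial, if_pos, mul_one,
    ← Finsupp.single_tsub]
  · norm_num [Lser_single]
  · rw [fin2_le_iff]; simp

lemma coeff_mul_X0_axis1 (q : PowerSeries k) (n : ℕ) :
    MvPowerSeries.coeff (Finsupp.single 1 n) (Lser q * MvPowerSeries.X (0 : Fin 2)) = 0 := by
  rw [MvPowerSeries.X, MvPowerSeries.coeff_mul_monomial, if_neg]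
  rw [fin2_le_iff]; simp

lemma coeff_mul_X0_zero (q : PowerSeries k) :
    MvPowerSeries.coeff (Finsupp.single (0 : Fin 2) 0) (Lser q * MvPowerSeries.X (0 : Fin 2))
      = 0 := by
  rw [Finsupp.single_zero, ← Finsupp.single_zero (1 : Fin 2)]
  exact coeff_mul_X0_axis1 q 0

lemma Lser_mul_mk (p q : PowerSeries k) :
    Ideal.Quotient.mk (nodalIdeal k) (Lser (p * q))
      = Ideal.Quotient.mk (nodalIdeal k) (Lser p * Lser q) := by
  rw [Ideal.Quotient.eq, mem_nodalIdeal_iff]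
  intro n
  constructor <;> rw [map_sub, Lser_single, Lser_mul_axis, sub_self]

/-- The algebra map `k⟦t⟧ → k⟦x,y⟧/(xy)`, `t ↦ x + y`. -/
noncomputable def nodalAlg : PowerSeries k →ₐ[k] Nodal k where
  toFun p := Ideal.Quotient.mk (nodalIdeal k) (Lser p)
  map_one' := by show Ideal.Quotient.mk (nodalIdeal k) (Lser 1) = 1; rw [Lser_one, map_one]
  map_mul' p q := by
    show Ideal.Quotient.mk (nodalIdeal k) (Lser (p * q)) = _
    rw [Lser_mul_mk, map_mul]
  map_zero' := by show Ideal.Quotient.mk (nodalIdeal k) (Lser 0) = 0; rw [Lser_zero, map_zero]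
  map_add' p q := by
    show Ideal.Quotient.mk (nodalIdeal k) (Lser (p + q)) = _
    rw [Lser_add, map_add]
  commutes' c := by
    show Ideal.Quotient.mk (nodalIdeal k) (Lser (PowerSeries.C c)) = _
    rw [Lser_C]
    rfl

lemma nodalAlg_apply (p : PowerSeries k) :
    nodalAlg p = Ideal.Quotient.mk (nodalIdeal k) (Lser p) := rfl

lemma nodalAlg_X : (nodalAlg (PowerSeries.X : PowerSeries k)) = nodalX k 0 + nodalX k 1 := by
  rw [nodalAlg_apply, Lser_X, map_add]; rfl
end Aux

theorem stmt6 (k : Type) [Field k] :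
    ∃ f : PowerSeries k →ₐ[k] Nodal k,
      f PowerSeries.X = nodalX k 0 + nodalX k 1 ∧
      letI : Module (PowerSeries k) (Nodal k) := Module.compHom (Nodal k) f.toRingHom
      ∃ b : Module.Basis (Fin 2) (PowerSeries k) (Nodal k),
        b 0 = 1 ∧ b 1 = nodalX k 0 := by
  refine ⟨nodalAlg, nodalAlg_X, ?_⟩
  letI : Module (PowerSeries k) (Nodal k) := Module.compHom (Nodal k) (nodalAlg (k := k)).toRingHom
  have smul_def : ∀ (p : PowerSeries k) (ξ : Nodal k), p • ξ = nodalAlg p * ξ := fun _ _ => rfl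
  set R := PowerSeries k
  set mkq := Ideal.Quotient.mk (nodalIdeal k) with hmkq
  let g : (Fin 2 → R) →ₗ[R] Nodal k :=
    { toFun := fun v => v 0 • (1 : Nodal k) + v 1 • nodalX k 0
      map_add' := fun v w => by
        simp only [Pi.add_apply, smul_def, map_add]; ring
      map_smul' := fun c v => by
        simp only [Pi.smul_apply, smul_eq_mul, smul_def, RingHom.id_apply, map_mul]; ring }
  have g_apply : ∀ v : Fin 2 → R,
      g v = mkq (Lser (v 0) + Lser (v 1) * MvPowerSeries.X (0 : Fin 2)) := by
    intro v
    show v 0 • (1 : Nodal k) + v 1 • nodalX k 0 = _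
    rw [smul_def, smul_def, mul_one, nodalAlg_apply, nodalAlg_apply, nodalX, map_add, map_mul]
  have hinj : Function.Injective g := by
    have key : ∀ v : Fin 2 → R, g v = 0 → v = 0 := by
      intro v hv
      rw [g_apply, hmkq, Ideal.Quotient.eq_zero_iff_mem, mem_nodalIdeal_iff] at hv
      have h0 : v 0 = 0 := by
        ext n
        have := (hv n).2
        rw [map_add, Lser_single, coeff_mul_X0_axis1, add_zero] at this
        simpa using this
      have h1 : v 1 = 0 := by
        ext n
        have := (hv (n + 1)).1
        rw [map_add, Lser_single, coeff_mul_X0_add, h0] at this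
        simpa using this
      funext j; fin_cases j <;> simp [h0, h1]
    intro v w h
    have := key (v - w) (by rw [map_sub, h, sub_self])
    exact sub_eq_zero.mp this
  have hsurj : Function.Surjective g := by
    intro ξ
    obtain ⟨F, rfl⟩ := Ideal.Quotient.mk_surjective ξ
    refine ⟨![PowerSeries.mk fun n => MvPowerSeries.coeff (Finsupp.single 1 n) F,
      PowerSeries.mk fun n => MvPowerSeries.coeff (Finsupp.single 0 (n + 1)) F
        - MvPowerSeries.coeff (Finsupp.single 1 (n + 1)) F], ?_⟩
    rw [g_apply, hmkq, Ideal.Quotient.eq, mem_nodalIdeal_iff]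
    intro n
    constructor
    · rcases Nat.eq_zero_or_pos n with rfl | hn
      · rw [map_sub, map_add, Lser_single, coeff_mul_X0_zero, add_zero]
        simp only [Matrix.cons_val_zero, PowerSeries.coeff_mk]
        rw [Finsupp.single_zero, Finsupp.single_zero, sub_self]
      · obtain ⟨m, rfl⟩ := Nat.exists_eq_add_of_lt hn
        rw [zero_add] at *
        rw [map_sub, map_add, Lser_single, coeff_mul_X0_add]
        simp only [Matrix.cons_val_zero, Matrix.cons_val_one, Matrix.head_cons,
          PowerSeries.coeff_mk]
        ring
    · rw [map_sub, map_add, Lser_single, coeff_mul_X0_axis1, add_zero]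
      simp only [Matrix.cons_val_zero, PowerSeries.coeff_mk, sub_self]
  let eqv : Nodal k ≃ₗ[R] (Fin 2 → R) := (LinearEquiv.ofBijective g ⟨hinj, hsurj⟩).symm
  refine ⟨Module.Basis.ofEquivFun eqv, ?_, ?_⟩
  · have : (Module.Basis.ofEquivFun eqv) 0 = eqv.symm (Pi.single 0 1) := by
      rw [Module.Basis.coe_ofEquivFun]
    rw [this]
    show g (Pi.single 0 1) = 1
    simp only [g, LinearMap.coe_mk, AddHom.coe_mk]
    rw [Pi.single_eq_same, Pi.single_eq_of_ne (by decide), one_smul, zero_smul, add_zero]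
  · have : (Module.Basis.ofEquivFun eqv) 1 = eqv.symm (Pi.single 1 1) := by
      rw [Module.Basis.coe_ofEquivFun]
    rw [this]
    show g (Pi.single 1 1) = nodalX k 0
    simp only [g, LinearMap.coe_mk, AddHom.coe_mk]
    rw [Pi.single_eq_same, Pi.single_eq_of_ne (by decide), one_smul, zero_smul, zero_add]
end

section
/- Let k be a field and A = k⟦x,y⟧/(xy). The k-linear involution ν of A fixing k, with ν(x) = x and ν(y) = y determined by the polarization ε(x) = +, ε(y) = − (namely ν(x) = ε(x)²·x = x and ν(y) = ε(y)²·y = y), is the identity map on A. Consequently A is a symmetric R-algebra, where R = k⟦t⟧ acts via t ↦ x + y: there is an isomorphism A ≅ Hom_R(A, R) of A-bimodules. -/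
set_option synthInstance.maxHeartbeats 1000000
set_option maxHeartbeats 1000000


namespace Stmt7Aux

open MvPowerSeries Finsupp

variable (k : Type) [Field k]

lemma add_eq_single {j : Fin 2} {n : ℕ} {d e : Fin 2 →₀ ℕ}
    (h : d + e = Finsupp.single j n) :
    d = Finsupp.single j (d j) ∧ e = Finsupp.single j (e j) := by
  constructor <;> ext j' <;> rcases eq_or_ne j' j with rfl | hj
  · simp
  · have := congrFun (congrArg (fun f : Fin 2 →₀ ℕ => (f : Fin 2 → ℕ)) h) j'
    simp only [Finsupp.coe_add, Pi.add_apply, Finsupp.single_apply,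
      if_neg (Ne.symm hj)] at this
    simp [Finsupp.single_apply, if_neg (Ne.symm hj), Nat.eq_zero_of_add_eq_zero_right this]
  · simp
  · have := congrFun (congrArg (fun f : Fin 2 →₀ ℕ => (f : Fin 2 → ℕ)) h) j'
    simp only [Finsupp.coe_add, Pi.add_apply, Finsupp.single_apply,
      if_neg (Ne.symm hj)] at this
    simp [Finsupp.single_apply, if_neg (Ne.symm hj), Nat.eq_zero_of_add_eq_zero_left this]

/-- "Set the other variable to zero": the ring hom `k⟦x,y⟧ → k⟦t⟧` keeping the
pure monomials in variable `j`. -/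
noncomputable def sj (j : Fin 2) : MvPowerSeries (Fin 2) k →+* PowerSeries k where
  toFun φ := PowerSeries.mk fun n => MvPowerSeries.coeff (Finsupp.single j n) φ
  map_one' := by
    ext n
    rw [PowerSeries.coeff_mk]
    classical
    rw [MvPowerSeries.coeff_one, PowerSeries.coeff_one]
    simp [Finsupp.single_eq_zero]
  map_mul' φ ψ := by
    ext n
    rw [PowerSeries.coeff_mk, PowerSeries.coeff_mul, MvPowerSeries.coeff_mul]
    simp only [PowerSeries.coeff_mk]
    refine Finset.sum_nbij' (fun p => (p.1 j, p.2 j))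
      (fun q => (Finsupp.single j q.1, Finsupp.single j q.2)) ?_ ?_ ?_ ?_ ?_
    · intro p hp
      rw [Finset.HasAntidiagonal.mem_antidiagonal] at hp ⊢
      have := congrFun (congrArg (fun f : Fin 2 →₀ ℕ => (f : Fin 2 → ℕ)) hp) j
      simpa using this
    · intro q hq
      rw [Finset.HasAntidiagonal.mem_antidiagonal] at hq ⊢
      rw [← Finsupp.single_add, hq]
    · intro p hp
      rw [Finset.HasAntidiagonal.mem_antidiagonal] at hp
      obtain ⟨h1, h2⟩ := add_eq_single hp
      exact Prod.ext h1.symm h2.symm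
    · intro q hq
      simp
    · intro p hp
      rw [Finset.HasAntidiagonal.mem_antidiagonal] at hp
      obtain ⟨h1, h2⟩ := add_eq_single hp
      rw [← h1, ← h2]
  map_zero' := by
    ext n
    simp [PowerSeries.coeff_mk]
  map_add' φ ψ := by
    ext n
    simp [PowerSeries.coeff_mk, PowerSeries.coeff_mk]

lemma coeff_sj (j : Fin 2) (φ : MvPowerSeries (Fin 2) k) (n : ℕ) :
    PowerSeries.coeff n (sj k j φ) = MvPowerSeries.coeff (Finsupp.single j n) φ :=
  by rw [show sj k j φ = PowerSeries.mk fun n => MvPowerSeries.coeff (Finsupp.single j n) φ from rfl, PowerSeries.coeff_mk]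

lemma fin2 : ∀ j : Fin 2, j = 0 ∨ j = 1 :=
  Fin.forall_fin_two.mpr ⟨Or.inl rfl, Or.inr rfl⟩

lemma mem_nodalIdeal_of (φ : MvPowerSeries (Fin 2) k)
    (h : ∀ (j : Fin 2) (n : ℕ), MvPowerSeries.coeff (Finsupp.single j n) φ = 0) :
    φ ∈ nodalIdeal k := by
  rw [nodalIdeal, Ideal.mem_span_singleton]
  refine ⟨fun d => MvPowerSeries.coeff
    (d + (Finsupp.single (0 : Fin 2) 1 + Finsupp.single (1 : Fin 2) 1)) φ, ?_⟩
  ext d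
  erw [MvPowerSeries.X_def, MvPowerSeries.X_def, MvPowerSeries.monomial_mul_monomial,
    one_mul, MvPowerSeries.coeff_monomial_mul]
  set e : Fin 2 →₀ ℕ := Finsupp.single (0 : Fin 2) 1 + Finsupp.single (1 : Fin 2) 1 with he
  have he0 : e 0 = 1 := by rw [he]; simp
  have he1 : e 1 = 1 := by rw [he]; simp
  by_cases hle : e ≤ d
  · rw [if_pos hle, one_mul, MvPowerSeries.coeff_apply]
    show φ d = MvPowerSeries.coeff (d - e + e) φ
    rw [tsub_add_cancel_of_le hle, MvPowerSeries.coeff_apply]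
  · rw [if_neg hle]
    rw [Finsupp.le_def] at hle
    push_neg at hle
    rw [Fin.exists_fin_two] at hle
    have hd : ∃ j : Fin 2, d = Finsupp.single j (d j) := by
      rcases hle with hl | hl
      · rw [he0] at hl
        have h0 : d 0 = 0 := by omega
        refine ⟨1, ?_⟩
        ext j'
        rcases fin2 j' with rfl | rfl <;> simp [h0, Finsupp.single_apply]
      · rw [he1] at hl
        have h1 : d 1 = 0 := by omega
        refine ⟨0, ?_⟩
        ext j'
        rcases fin2 j' with rfl | rfl <;> simp [h1, Finsupp.single_apply]
    obtain ⟨j, hj⟩ := hd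
    rw [hj]
    exact h j (d j)

lemma sj_eq_zero_of_mem (φ : MvPowerSeries (Fin 2) k) (hφ : φ ∈ nodalIdeal k)
    (j : Fin 2) : sj k j φ = 0 := by
  rw [nodalIdeal, Ideal.mem_span_singleton] at hφ
  obtain ⟨c, rfl⟩ := hφ
  ext n
  rw [coeff_sj, MvPowerSeries.X_def, MvPowerSeries.X_def,
    MvPowerSeries.monomial_mul_monomial, one_mul, MvPowerSeries.coeff_monomial_mul]
  rw [if_neg, map_zero]
  intro hle
  rw [Finsupp.le_def] at hle
  rcases fin2 j with rfl | rfl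
  · have h1 := hle 1
    simp [Finsupp.single_apply] at h1
  · have h0 := hle 0
    simp [Finsupp.single_apply] at h0

/-- The injective ring hom `A = k⟦x,y⟧/(xy) → k⟦t⟧ × k⟦t⟧`. -/
noncomputable def Ebar : Nodal k →+* PowerSeries k × PowerSeries k :=
  Ideal.Quotient.lift (nodalIdeal k) ((sj k 0).prod (sj k 1)) (fun a ha => by
    rw [RingHom.prod_apply, sj_eq_zero_of_mem k a ha, sj_eq_zero_of_mem k a ha]
    rfl)

lemma Ebar_mk (φ : MvPowerSeries (Fin 2) k) :
    Ebar k (Ideal.Quotient.mk (nodalIdeal k) φ) = (sj k 0 φ, sj k 1 φ) := rfl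

lemma Ebar_inj : Function.Injective (Ebar k) := by
  intro a b hab
  obtain ⟨φ, rfl⟩ := Ideal.Quotient.mk_surjective a
  obtain ⟨ψ, rfl⟩ := Ideal.Quotient.mk_surjective b
  rw [Ideal.Quotient.mk_eq_mk_iff_sub_mem]
  refine mem_nodalIdeal_of k _ ?_
  intro j n
  rw [map_sub, ← coeff_sj, ← coeff_sj, sub_eq_zero]
  rcases fin2 j with rfl | rfl
  · rw [show sj k 0 φ = (Ebar k (Ideal.Quotient.mk _ φ)).1 from rfl,
      show sj k 0 ψ = (Ebar k (Ideal.Quotient.mk _ ψ)).1 from rfl, hab]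
  · rw [show sj k 1 φ = (Ebar k (Ideal.Quotient.mk _ φ)).2 from rfl,
      show sj k 1 ψ = (Ebar k (Ideal.Quotient.mk _ ψ)).2 from rfl, hab]
/-- Raw inclusion `k⟦t⟧ → k⟦x,y⟧` along the `j`-th variable. -/
noncomputable def inj (j : Fin 2) (r : PowerSeries k) : MvPowerSeries (Fin 2) k :=
  fun d => if d = Finsupp.single j (d j) then PowerSeries.coeff (d j) r else 0

lemma coeff_inj (j : Fin 2) (r : PowerSeries k) (d : Fin 2 →₀ ℕ) :
    MvPowerSeries.coeff d (inj k j r)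
      = if d = Finsupp.single j (d j) then PowerSeries.coeff (d j) r else 0 := by
  rw [MvPowerSeries.coeff_apply, inj]

lemma sj_inj_same (j : Fin 2) (r : PowerSeries k) : sj k j (inj k j r) = r := by
  ext n
  rw [coeff_sj, coeff_inj]
  rw [if_pos (by rw [Finsupp.single_eq_same]), Finsupp.single_eq_same]

lemma sj_inj_ne (j j' : Fin 2) (h : j' ≠ j) (r : PowerSeries k) :
    sj k j' (inj k j r) = PowerSeries.C (R := k) (PowerSeries.constantCoeff (R := k) r) := by
  ext n
  rw [coeff_sj, coeff_inj, Finsupp.single_eq_of_ne h.symm, PowerSeries.coeff_C]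
  by_cases hn : n = 0
  · subst hn
    rw [if_pos (by simp), if_pos rfl, PowerSeries.coeff_zero_eq_constantCoeff_apply]
  · rw [Finsupp.single_zero, if_neg (fun hc => hn (Finsupp.single_eq_zero.mp hc)),
      if_neg hn]

lemma sj_C (j : Fin 2) (c : k) :
    sj k j (MvPowerSeries.C (σ := Fin 2) (R := k) c) = PowerSeries.C (R := k) c := by
  ext n
  classical
  rw [coeff_sj, MvPowerSeries.coeff_C, PowerSeries.coeff_C]
  simp [Finsupp.single_eq_zero]

lemma sj_X_same (j : Fin 2) : sj k j (MvPowerSeries.X j) = PowerSeries.X := by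
  ext n
  classical
  rw [coeff_sj, MvPowerSeries.coeff_X, PowerSeries.coeff_X]
  by_cases hn : n = 1
  · subst hn
    rw [if_pos rfl, if_pos rfl]
  · rw [if_neg, if_neg hn]
    intro hc
    exact hn (by simpa using congrFun (congrArg (fun f : Fin 2 →₀ ℕ => (f : Fin 2 → ℕ)) hc) j)

lemma sj_X_ne (j j' : Fin 2) (h : j' ≠ j) : sj k j' (MvPowerSeries.X j) = 0 := by
  ext n
  classical
  rw [coeff_sj, MvPowerSeries.coeff_X, map_zero]
  rw [if_neg]
  intro hc
  have := congrFun (congrArg (fun f : Fin 2 →₀ ℕ => (f : Fin 2 → ℕ)) hc) j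
  simp [Finsupp.single_apply, if_neg h] at this

/-- The raw map underlying `f : k⟦t⟧ → A`, `t ↦ x + y`. -/
noncomputable def f0 (r : PowerSeries k) : Nodal k :=
  Ideal.Quotient.mk (nodalIdeal k)
    (inj k 0 r + inj k 1 r - MvPowerSeries.C (σ := Fin 2) (R := k) (PowerSeries.constantCoeff (R := k) r))

lemma Ebar_f0 (r : PowerSeries k) : Ebar k (f0 k r) = (r, r) := by
  rw [f0, Ebar_mk, Prod.ext_iff]
  constructor
  · show sj k 0 _ = r
    rw [map_sub, map_add, sj_inj_same, sj_inj_ne k 1 0 (by decide), sj_C]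
    ring
  · show sj k 1 _ = r
    rw [map_sub, map_add, sj_inj_ne k 0 1 (by decide), sj_inj_same, sj_C]
    ring

lemma Ebar_X0 : Ebar k (nodalX k 0) = (PowerSeries.X, 0) := by
  rw [nodalX, Ebar_mk, sj_X_same, sj_X_ne k 0 1 (by decide)]

lemma Ebar_X1 : Ebar k (nodalX k 1) = (0, PowerSeries.X) := by
  rw [nodalX, Ebar_mk, sj_X_same, sj_X_ne k 1 0 (by decide)]

/-- The `k`-algebra hom `f : k⟦t⟧ → A` with `f(t) = x + y`. -/
noncomputable def nodalF : PowerSeries k →ₐ[k] Nodal k where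
  toFun := f0 k
  map_one' := Ebar_inj k (by rw [Ebar_f0, map_one]; rfl)
  map_mul' r s := Ebar_inj k (by
    rw [Ebar_f0, map_mul, Ebar_f0, Ebar_f0, Prod.mk_mul_mk])
  map_zero' := Ebar_inj k (by rw [Ebar_f0, map_zero]; rfl)
  map_add' r s := Ebar_inj k (by
    rw [Ebar_f0, map_add, Ebar_f0, Ebar_f0, Prod.mk_add_mk])
  commutes' c := Ebar_inj k (by
    have h1 : algebraMap k (PowerSeries k) c = PowerSeries.C (R := k) c := rfl
    have h2 : algebraMap k (Nodal k) c
        = Ideal.Quotient.mk (nodalIdeal k) (MvPowerSeries.C (σ := Fin 2) (R := k) c) := rfl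
    rw [h1, h2, Ebar_f0, Ebar_mk, sj_C, sj_C])

lemma nodalF_apply (r : PowerSeries k) : nodalF k r = f0 k r := rfl

lemma Ebar_nodalF (r : PowerSeries k) : Ebar k (nodalF k r) = (r, r) := Ebar_f0 k r

lemma nodalF_X : nodalF k PowerSeries.X = nodalX k 0 + nodalX k 1 :=
  Ebar_inj k (by rw [Ebar_nodalF, map_add, Ebar_X0, Ebar_X1, Prod.mk_add_mk,
    add_zero, zero_add])
noncomputable def nodalModule : Module (PowerSeries k) (Nodal k) :=
  Module.compHom (Nodal k) (nodalF k).toRingHom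

attribute [local instance] nodalModule

lemma smul_def (r : PowerSeries k) (w : Nodal k) : r • w = nodalF k r * w := rfl

/-- Division by `t` on `k⟦t⟧` (dropping the constant term). -/
noncomputable def D (s : PowerSeries k) : PowerSeries k :=
  PowerSeries.mk fun n => PowerSeries.coeff (n + 1) s

lemma coeff_D (s : PowerSeries k) (n : ℕ) :
    PowerSeries.coeff n (D k s) = PowerSeries.coeff (n + 1) s :=
  PowerSeries.coeff_mk _ _

lemma D_add (s t : PowerSeries k) : D k (s + t) = D k s + D k t := by
  ext n; simp [coeff_D]

lemma D_sub (s t : PowerSeries k) : D k (s - t) = D k s - D k t := by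
  ext n; simp [coeff_D]

lemma D_zero : D k 0 = 0 := by ext n; simp [coeff_D]

lemma D_X_mul (u : PowerSeries k) : D k (PowerSeries.X * u) = u := by
  ext n; rw [coeff_D, PowerSeries.coeff_succ_X_mul]

lemma X_mul_D (s : PowerSeries k) (h : PowerSeries.constantCoeff (R := k) s = 0) :
    PowerSeries.X * D k s = s := by
  ext n
  cases n with
  | zero =>
      rw [PowerSeries.coeff_zero_eq_constantCoeff_apply, map_mul,
        PowerSeries.constantCoeff_X, zero_mul,
        PowerSeries.coeff_zero_eq_constantCoeff_apply, h]
  | succ m => rw [PowerSeries.coeff_succ_X_mul, coeff_D]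

lemma D_X : D k (PowerSeries.X : PowerSeries k) = 1 := by
  have := D_X_mul k (1 : PowerSeries k)
  rwa [mul_one] at this

lemma const_Ebar (w : Nodal k) :
    PowerSeries.constantCoeff (R := k) (Ebar k w).1
      = PowerSeries.constantCoeff (R := k) (Ebar k w).2 := by
  obtain ⟨φ, rfl⟩ := Ideal.Quotient.mk_surjective w
  rw [Ebar_mk]
  show PowerSeries.constantCoeff (R := k) (sj k 0 φ) = PowerSeries.constantCoeff (R := k) (sj k 1 φ)
  rw [← PowerSeries.coeff_zero_eq_constantCoeff_apply,
    ← PowerSeries.coeff_zero_eq_constantCoeff_apply, coeff_sj, coeff_sj,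
    Finsupp.single_zero, Finsupp.single_zero]

lemma X_mul_D_Ebar (w : Nodal k) :
    PowerSeries.X * D k ((Ebar k w).1 - (Ebar k w).2)
      = (Ebar k w).1 - (Ebar k w).2 :=
  X_mul_D k _ (by rw [map_sub, const_Ebar, sub_self])

/-- The trace-like functional `λ : A → R`, `a₀(t) + a₁(t)x ↦ a₁(t)`. -/
noncomputable def lam : Nodal k →ₗ[PowerSeries k] PowerSeries k where
  toFun w := D k ((Ebar k w).1 - (Ebar k w).2)
  map_add' w₁ w₂ := by
    show D k ((Ebar k (w₁ + w₂)).1 - (Ebar k (w₁ + w₂)).2)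
      = D k ((Ebar k w₁).1 - (Ebar k w₁).2) + D k ((Ebar k w₂).1 - (Ebar k w₂).2)
    rw [map_add, Prod.fst_add, Prod.snd_add]
    rw [← D_add]
    ring_nf
  map_smul' r w := by
    show D k ((Ebar k (r • w)).1 - (Ebar k (r • w)).2)
      = r • D k ((Ebar k w).1 - (Ebar k w).2)
    rw [smul_eq_mul, smul_def, map_mul, Ebar_nodalF, Prod.fst_mul, Prod.snd_mul]
    show D k (r * (Ebar k w).1 - r * (Ebar k w).2) = r * D k _
    rw [← mul_sub, ← X_mul_D_Ebar k w, ← mul_assoc, mul_comm r PowerSeries.X,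
      mul_assoc, D_X_mul, D_X_mul]

lemma lam_apply (w : Nodal k) : lam k w = D k ((Ebar k w).1 - (Ebar k w).2) := rfl

lemma repr (w : Nodal k) :
    nodalF k (Ebar k w).2 + nodalF k (lam k w) * nodalX k 0 = w := by
  apply Ebar_inj k
  rw [map_add, map_mul, Ebar_nodalF, Ebar_nodalF, Ebar_X0, lam_apply, Prod.mk_mul_mk,
    Prod.mk_add_mk, mul_zero, mul_comm]
  rw [X_mul_D_Ebar k w]
  exact Prod.ext (by ring) (by ring)

lemma lam_nodalF (a : PowerSeries k) : lam k (nodalF k a) = 0 := by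
  rw [lam_apply, Ebar_nodalF]
  show D k (a - a) = 0
  rw [sub_self, D_zero]

lemma lam_X0 : lam k (nodalX k 0) = 1 := by
  rw [lam_apply, Ebar_X0]
  show D k (PowerSeries.X - 0) = 1
  rw [sub_zero, D_X]

lemma lam_nodalF_mul_X0 (b : PowerSeries k) :
    lam k (nodalF k b * nodalX k 0) = b := by
  rw [← smul_def, map_smul, lam_X0, smul_eq_mul, mul_one]

lemma X0_sq : nodalX k 0 * nodalX k 0 = nodalF k PowerSeries.X * nodalX k 0 := by
  apply Ebar_inj k
  rw [map_mul, map_mul, Ebar_X0, Ebar_nodalF, Prod.mk_mul_mk, Prod.mk_mul_mk,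
    mul_zero, mul_zero]
/-- The pairing `θ : A → Hom_R(A, R)`, `θ(w)(z) = λ(wz)`. -/
noncomputable def theta :
    Nodal k →ₗ[PowerSeries k] (Nodal k →ₗ[PowerSeries k] PowerSeries k) :=
  LinearMap.mk₂ (PowerSeries k) (fun w z => lam k (w * z))
    (fun w₁ w₂ z => show lam k ((w₁ + w₂) * z) = lam k (w₁ * z) + lam k (w₂ * z) by
      rw [add_mul, map_add])
    (fun r w z => show lam k ((r • w) * z) = r • lam k (w * z) by
      rw [smul_def, mul_assoc, ← smul_def, map_smul])
    (fun w z₁ z₂ => show lam k (w * (z₁ + z₂)) = lam k (w * z₁) + lam k (w * z₂) by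
      rw [mul_add, map_add])
    (fun r w z => show lam k (w * (r • z)) = r • lam k (w * z) by
      rw [smul_def, mul_left_comm w (nodalF k r) z, ← smul_def, map_smul])

lemma theta_apply (w z : Nodal k) : theta k w z = lam k (w * z) := rfl

/-- The inverse pairing. -/
noncomputable def thetaInv :
    (Nodal k →ₗ[PowerSeries k] PowerSeries k) →ₗ[PowerSeries k] Nodal k where
  toFun φ := nodalF k (φ (nodalX k 0) - PowerSeries.X * φ 1)
    + nodalF k (φ 1) * nodalX k 0
  map_add' φ ψ := by
    show nodalF k ((φ + ψ) (nodalX k 0) - PowerSeries.X * (φ + ψ) 1)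
        + nodalF k ((φ + ψ) 1) * nodalX k 0 = _
    rw [LinearMap.add_apply, LinearMap.add_apply]
    rw [show φ (nodalX k 0) + ψ (nodalX k 0) - PowerSeries.X * (φ 1 + ψ 1)
        = (φ (nodalX k 0) - PowerSeries.X * φ 1) + (ψ (nodalX k 0)
          - PowerSeries.X * ψ 1) from by ring]
    rw [map_add, map_add]
    ring
  map_smul' r φ := by
    show nodalF k ((r • φ) (nodalX k 0) - PowerSeries.X * (r • φ) 1)
        + nodalF k ((r • φ) 1) * nodalX k 0 = _
    rw [LinearMap.smul_apply, LinearMap.smul_apply, RingHom.id_apply,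
      smul_eq_mul, smul_eq_mul,
      show r * φ (nodalX k 0) - PowerSeries.X * (r * φ 1)
        = r * (φ (nodalX k 0) - PowerSeries.X * φ 1) from by ring,
      map_mul, map_mul, smul_def]
    ring

lemma thetaInv_apply (φ : Nodal k →ₗ[PowerSeries k] PowerSeries k) :
    thetaInv k φ = nodalF k (φ (nodalX k 0) - PowerSeries.X * φ 1)
      + nodalF k (φ 1) * nodalX k 0 := rfl

lemma lam_mul_repr (c d a b : PowerSeries k) :
    lam k ((nodalF k c + nodalF k d * nodalX k 0)
        * (nodalF k a + nodalF k b * nodalX k 0))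
      = c * b + d * a + d * b * PowerSeries.X := by
  have hexp : (nodalF k c + nodalF k d * nodalX k 0)
        * (nodalF k a + nodalF k b * nodalX k 0)
      = nodalF k (c * a) + nodalF k (c * b + d * a + d * b * PowerSeries.X)
        * nodalX k 0 := by
    rw [add_mul, mul_add, mul_add, map_mul, map_add, map_add, map_mul, map_mul,
      map_mul, map_mul]
    rw [mul_mul_mul_comm (nodalF k d) (nodalX k 0), X0_sq]
    ring
  rw [hexp, map_add, lam_nodalF, lam_nodalF_mul_X0, zero_add]

lemma theta_inv_left (w : Nodal k) : thetaInv k (theta k w) = w := by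
  rw [thetaInv_apply, theta_apply, theta_apply, mul_one]
  have hx : lam k (w * nodalX k 0)
      = (Ebar k w).2 + lam k w * PowerSeries.X := by
    conv_lhs => rw [← repr k w]
    rw [show (nodalF k (Ebar k w).2 + nodalF k (lam k w) * nodalX k 0) * nodalX k 0
        = (nodalF k (Ebar k w).2 + nodalF k (lam k w) * nodalX k 0)
          * (nodalF k 0 + nodalF k 1 * nodalX k 0) from by
      rw [map_zero, map_one, zero_add, one_mul], lam_mul_repr]
    ring
  rw [hx, show (Ebar k w).2 + lam k w * PowerSeries.X
      - PowerSeries.X * lam k w = (Ebar k w).2 from by ring, repr]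

lemma theta_inv_right (φ : Nodal k →ₗ[PowerSeries k] PowerSeries k)
    (z : Nodal k) : theta k (thetaInv k φ) z = φ z := by
  rw [theta_apply, thetaInv_apply]
  rw [← repr k z]
  rw [lam_mul_repr]
  rw [show nodalF k (Ebar k z).2 + nodalF k (lam k z) * nodalX k 0
      = (Ebar k z).2 • (1 : Nodal k) + (lam k z) • nodalX k 0 from by
    rw [smul_def, smul_def, mul_one]]
  rw [map_add, map_smul, map_smul, smul_eq_mul, smul_eq_mul]
  ring

/-- `A ≅ Hom_R(A, R)`. -/
noncomputable def thetaEquiv :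
    Nodal k ≃ₗ[PowerSeries k] (Nodal k →ₗ[PowerSeries k] PowerSeries k) :=
  LinearEquiv.ofLinear (theta k) (thetaInv k)
    (LinearMap.ext fun φ => LinearMap.ext fun z => by
      simp only [LinearMap.comp_apply, LinearMap.id_apply]
      exact theta_inv_right k φ z)
    (LinearMap.ext fun w => by
      simp only [LinearMap.comp_apply, LinearMap.id_apply]
      exact theta_inv_left k w)

lemma thetaEquiv_apply (w z : Nodal k) : thetaEquiv k w z = lam k (w * z) := rfl

end Stmt7Aux

/-- The involution `ν` of `A = k⟦x,y⟧/(xy)` determined by the polarization `ε(x) = +`,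
`ε(y) = −`, i.e. the `R = k⟦t⟧`-algebra endomorphism (where `t` acts by `x + y`) with
`ν(x) = x` and `ν(y) = y`, is the identity map on `A`.  Consequently `A` is a symmetric
`R`-algebra: there is an isomorphism `A ≅ Hom_R(A, R)` of `A`-bimodules. -/
theorem stmt7 (k : Type) [Field k] :
    ∃ f : PowerSeries k →ₐ[k] Nodal k,
      f PowerSeries.X = nodalX k 0 + nodalX k 1 ∧
      (∀ ν : Nodal k →+* Nodal k, (∀ r : PowerSeries k, ν (f r) = f r) →
        ν (nodalX k 0) = nodalX k 0 → ν (nodalX k 1) = nodalX k 1 →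
        ν = RingHom.id (Nodal k)) ∧
      letI : Module (PowerSeries k) (Nodal k) := Module.compHom (Nodal k) f.toRingHom
      ∃ θ : Nodal k ≃ₗ[PowerSeries k] (Nodal k →ₗ[PowerSeries k] PowerSeries k),
        ∀ a b w z : Nodal k, θ (a * w * b) z = θ w (b * z * a) := by
  refine ⟨Stmt7Aux.nodalF k, Stmt7Aux.nodalF_X k, ?_, ?_⟩
  · intro ν hr h0 _
    refine RingHom.ext fun w => ?_
    rw [RingHom.id_apply]
    conv_lhs => rw [← Stmt7Aux.repr k w]
    conv_rhs => rw [← Stmt7Aux.repr k w]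
    rw [map_add, map_mul, hr, hr, h0]
  · refine ⟨Stmt7Aux.thetaEquiv k, fun a b w z => ?_⟩
    show Stmt7Aux.lam k (a * w * b * z) = Stmt7Aux.lam k (w * (b * z * a))
    congr 1
    ring
end

section
/- Let S be a commutative ring, m a maximal ideal of S with residue field k = S/m, and A an S-algebra which is a finitely generated free S-module. Set Ā = A/mA and A^∨ = Hom_S(A, S), ω̄ = Hom_k(Ā, k). Then the map φ : Ā ⊗_A A^∨ → ω̄ sending ā ⊗ f to the form x + mA ↦ f(xa) + m is a well-defined isomorphism of (Ā, A)-bimodules. -/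
open scoped TensorProduct

variable (S : Type) [CommRing S] (m : Ideal S)
variable (A : Type) [Ring A] [Algebra S A]

/-- The reduction map `A^∨ = Hom_S(A,S) → ω̄ = Hom_k(Ā,k)`, where `k = S/m` and
`Ā = k ⊗[S] A ≅ A/mA`, sending `f` to the induced form `x̄ ↦ f(x) + m`. -/
noncomputable def redDual (f : A →ₗ[S] S) :
    ((S ⧸ m) ⊗[S] A) →ₗ[S ⧸ m] (S ⧸ m) :=
  (TensorProduct.AlgebraTensorModule.rid S (S ⧸ m) (S ⧸ m)).toLinearMap ∘ₗ
    f.baseChange (S ⧸ m)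

lemma redDual_tmul (f : A →ₗ[S] S) (c : S ⧸ m) (x : A) :
    redDual S m A f (c ⊗ₜ[S] x) = c * Ideal.Quotient.mk m (f x) := by
  simp [redDual, TensorProduct.AlgebraTensorModule.rid_tmul]
  rw [Algebra.smul_def, Ideal.Quotient.algebraMap_eq, mul_comm]

lemma redDual_ext {g h : ((S ⧸ m) ⊗[S] A) →ₗ[S ⧸ m] (S ⧸ m)}
    (H : ∀ x : A, g ((1 : S ⧸ m) ⊗ₜ[S] x) = h ((1 : S ⧸ m) ⊗ₜ[S] x)) : g = h := by
  apply LinearMap.restrictScalars_injective S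
  apply TensorProduct.ext'
  intro c x
  have : c ⊗ₜ[S] x = c • ((1 : S ⧸ m) ⊗ₜ[S] x) := by
    rw [TensorProduct.smul_tmul', smul_eq_mul, mul_one]
  simp only [LinearMap.restrictScalars_apply, this, map_smul, H]


/-- For `S` commutative, `m ⊆ S` maximal with residue field `k = S/m`, and `A` an
`S`-algebra which is finitely generated free as an `S`-module, the map
`φ : Ā ⊗_A A^∨ → ω̄`, `ā ⊗ f ↦ (x + mA ↦ f(xa) + m)` is a well-defined isomorphism of
`(Ā, A)`-bimodules.  Presenting `Ā ⊗_A A^∨` as the quotient of `A^∨` by `m·A^∨`, this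
says: the reduction map `A^∨ → ω̄` is surjective, its kernel is `m·A^∨`, and it is
compatible with the bimodule actions `(a·f·b)(x) = f(bxa)`. -/
theorem stmt9 [m.IsMaximal] [Module.Free S A] [Module.Finite S A] :
    (∀ (f : A →ₗ[S] S) (x : A),
      redDual S m A f ((1 : S ⧸ m) ⊗ₜ[S] x) = Ideal.Quotient.mk m (f x)) ∧
    Function.Surjective (redDual S m A) ∧
    (∀ f : A →ₗ[S] S,
      redDual S m A f = 0 ↔ f ∈ m • (⊤ : Submodule S (A →ₗ[S] S))) ∧
    ∀ (f : A →ₗ[S] S) (a b : A),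
      redDual S m A (f ∘ₗ LinearMap.mulLeft S b ∘ₗ LinearMap.mulRight S a) =
        redDual S m A f ∘ₗ
          LinearMap.mulLeft (S ⧸ m)
            (Algebra.TensorProduct.includeRight (R := S) (A := S ⧸ m) (B := A) b) ∘ₗ
          LinearMap.mulRight (S ⧸ m)
            (Algebra.TensorProduct.includeRight (R := S) (A := S ⧸ m) (B := A) a) := by
  have h1 : ∀ (f : A →ₗ[S] S) (x : A),
      redDual S m A f ((1 : S ⧸ m) ⊗ₜ[S] x) = Ideal.Quotient.mk m (f x) := by
    intro f x; rw [redDual_tmul, one_mul]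
  refine ⟨h1, ?_, ?_, ?_⟩
  · -- surjectivity
    intro g
    set b := Module.Free.chooseBasis S A with hb
    choose s hs using fun i => Ideal.Quotient.mk_surjective (I := m) (g ((1 : S ⧸ m) ⊗ₜ[S] b i))
    refine ⟨b.constr ℕ s, ?_⟩
    apply Module.Basis.ext (b.baseChange (S ⧸ m))
    intro i
    rw [Module.Basis.baseChange_apply, h1, Module.Basis.constr_basis, hs]
  · -- kernel
    intro f
    constructor
    · intro hf
      set b := Module.Free.chooseBasis S A with hb
      have key : ∀ x : A, f x ∈ m := by
        intro x
        have := h1 f x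
        rw [hf] at this
        simpa [Ideal.Quotient.eq_zero_iff_mem] using this.symm
      have : f = ∑ i, f (b i) • (b.coord i) := by
        apply b.ext
        intro j
        simp [Module.Basis.coord_apply, Module.Basis.repr_self, Finsupp.single_apply]
      rw [this]
      exact Submodule.sum_mem _ fun i _ =>
        Submodule.smul_mem_smul (key (b i)) Submodule.mem_top
    · intro hf
      apply redDual_ext
      intro x
      rw [h1, LinearMap.zero_apply, Ideal.Quotient.eq_zero_iff_mem]
      refine Submodule.smul_induction_on hf ?_ ?_
      · intro c hc g _
        simpa using m.mul_mem_right (g x) hc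
      · intro g h hg hh
        simpa using m.add_mem hg hh
  · -- bimodule
    intro f a b
    apply redDual_ext
    intro x
    simp only [LinearMap.comp_apply, LinearMap.mulLeft_apply, LinearMap.mulRight_apply,
      Algebra.TensorProduct.includeRight_apply, h1, Algebra.TensorProduct.tmul_mul_tmul,
      one_mul, mul_one]
end

section
/- Let S be a commutative ring, m a maximal ideal with residue field k, and A an S-algebra which is a finitely generated free S-module. If A is symmetric over S, i.e. Hom_S(A, S) ≅ A as A-bimodules, then Ā = A/mA is symmetric over k, i.e. Hom_k(Ā, k) ≅ Ā as Ā-bimodules. -/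
open scoped TensorProduct

section Aux

variable (S : Type) [CommRing S] (k : Type) [CommRing k] [Algebra S k]
  (A : Type) [Ring A] [Algebra S A]

/-- The natural map `f ↦ (c ⊗ x ↦ c • π (f x))`. -/
noncomputable def phiAux : (A →ₗ[S] S) →ₗ[S] ((k ⊗[S] A) →ₗ[k] k) where
  toFun f := TensorProduct.AlgebraTensorModule.lift
    (LinearMap.toSpanSingleton k (A →ₗ[S] k) ((Algebra.linearMap S k).comp f))
  map_add' f g := by
    ext x
    simp [TensorProduct.AlgebraTensorModule.lift_tmul]
  map_smul' s f := by
    ext x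
    simp [TensorProduct.AlgebraTensorModule.lift_tmul, Algebra.smul_def, mul_comm]

@[simp] lemma phiAux_tmul (f : A →ₗ[S] S) (c : k) (x : A) :
    phiAux S k A f (c ⊗ₜ x) = c * algebraMap S k (f x) := by
  simp [phiAux, TensorProduct.AlgebraTensorModule.lift_tmul, smul_eq_mul]

end Aux

section Aux2

variable (S : Type) [CommRing S] (k : Type) [CommRing k] [Algebra S k]
  (A : Type) [Ring A] [Algebra S A]

/-- The natural map `k ⊗ Hom_S(A,S) → Hom_k(k ⊗ A, k)`. -/
noncomputable def dualBC : (k ⊗[S] (A →ₗ[S] S)) →ₗ[k] ((k ⊗[S] A) →ₗ[k] k) :=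
  TensorProduct.AlgebraTensorModule.lift
    (LinearMap.toSpanSingleton k ((A →ₗ[S] S) →ₗ[S] ((k ⊗[S] A) →ₗ[k] k)) (phiAux S k A))

@[simp] lemma dualBC_tmul (c : k) (f : A →ₗ[S] S) (d : k) (x : A) :
    dualBC S k A (c ⊗ₜ f) (d ⊗ₜ x) = c * d * algebraMap S k (f x) := by
  simp [dualBC, TensorProduct.AlgebraTensorModule.lift_tmul, smul_eq_mul, mul_assoc]

lemma dualBC_bijective [Module.Free S A] [Module.Finite S A] :
    Function.Bijective (dualBC S k A) := by
  classical
  let b := Module.Free.chooseBasis S A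
  let B1 : Module.Basis (Module.Free.ChooseBasisIndex S A) k (k ⊗[S] (A →ₗ[S] S)) :=
    (b.dualBasis).baseChange k
  let B2 : Module.Basis (Module.Free.ChooseBasisIndex S A) k ((k ⊗[S] A) →ₗ[k] k) :=
    (b.baseChange k).dualBasis
  have hEq : dualBC S k A = (B1.equiv B2 (Equiv.refl _)).toLinearMap := by
    apply B1.ext
    intro i
    rw [LinearEquiv.coe_coe, Module.Basis.equiv_apply]
    apply (b.baseChange k).ext
    intro j
    simp only [B1, B2, Module.Basis.baseChange_apply, dualBC_tmul, Module.Basis.dualBasis_apply_self,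
      Equiv.refl_apply]
    rw [show (1:k) ⊗ₜ[S] b j = (b.baseChange k) j from (Module.Basis.baseChange_apply ..).symm,
      Module.Basis.dualBasis_apply_self]
    by_cases hij : j = i <;> simp [hij]
  rw [hEq]
  exact (B1.equiv B2 (Equiv.refl _)).bijective

end Aux2

theorem auxMain (S : Type) [CommRing S] (k : Type) [CommRing k] [Algebra S k]
    (A : Type) [Ring A] [Algebra S A] [Module.Free S A] [Module.Finite S A]
    (h : ∃ θ : A ≃ₗ[S] (A →ₗ[S] S),
      ∀ a b x z : A, θ (a * x * b) z = θ x (b * z * a)) :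
    ∃ θ' : (k ⊗[S] A) ≃ₗ[k] ((k ⊗[S] A) →ₗ[k] k),
      ∀ a b x z : k ⊗[S] A, θ' (a * x * b) z = θ' x (b * z * a) := by
  obtain ⟨θ, hθ⟩ := h
  let E2 : (k ⊗[S] (A →ₗ[S] S)) ≃ₗ[k] ((k ⊗[S] A) →ₗ[k] k) :=
    LinearEquiv.ofBijective (dualBC S k A) (dualBC_bijective S k A)
  let θ' : (k ⊗[S] A) ≃ₗ[k] ((k ⊗[S] A) →ₗ[k] k) :=
    (LinearEquiv.baseChange S k A (A →ₗ[S] S) θ).trans E2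
  have key : ∀ (c d : k) (x z : A),
      θ' (c ⊗ₜ x) (d ⊗ₜ z) = c * d * algebraMap S k (θ x z) := by
    intro c d x z
    show E2 ((LinearEquiv.baseChange S k A (A →ₗ[S] S) θ) (c ⊗ₜ x)) (d ⊗ₜ z) = _
    have : (LinearEquiv.baseChange S k A (A →ₗ[S] S) θ) (c ⊗ₜ x) = c ⊗ₜ (θ x) := rfl
    rw [this]
    show dualBC S k A (c ⊗ₜ (θ x)) (d ⊗ₜ z) = _
    rw [dualBC_tmul]
  refine ⟨θ', ?_⟩
  intro a b x z
  induction a using TensorProduct.induction_on with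
  | zero => simp
  | add u v hu hv => simp only [add_mul, mul_add, map_add, LinearMap.add_apply, hu, hv]
  | tmul ca a0 =>
  induction b using TensorProduct.induction_on with
  | zero => simp
  | add u v hu hv => simp only [add_mul, mul_add, map_add, LinearMap.add_apply, hu, hv]
  | tmul cb b0 =>
  induction x using TensorProduct.induction_on with
  | zero => simp
  | add u v hu hv => simp only [add_mul, mul_add, map_add, LinearMap.add_apply, hu, hv]
  | tmul cx x0 =>
  induction z using TensorProduct.induction_on with
  | zero => simp
  | add u v hu hv => simp only [add_mul, mul_add, map_add, LinearMap.add_apply, hu, hv]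
  | tmul cz z0 =>
  rw [Algebra.TensorProduct.tmul_mul_tmul, Algebra.TensorProduct.tmul_mul_tmul,
    Algebra.TensorProduct.tmul_mul_tmul, Algebra.TensorProduct.tmul_mul_tmul,
    key, key, hθ]
  ring


/-- If `A` is an `S`-algebra, finitely generated free as an `S`-module, and `A` is
symmetric over `S` (i.e. `Hom_S(A,S) ≅ A` as `A`-bimodules), then for any maximal ideal
`m ⊆ S` with residue field `k = S/m`, the quotient `Ā = k ⊗[S] A ≅ A/mA` is symmetric
over `k` (i.e. `Hom_k(Ā,k) ≅ Ā` as `Ā`-bimodules). -/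
theorem stmt10 (S : Type) [CommRing S] (m : Ideal S) [m.IsMaximal]
    (A : Type) [Ring A] [Algebra S A] [Module.Free S A] [Module.Finite S A]
    (h : ∃ θ : A ≃ₗ[S] (A →ₗ[S] S),
      ∀ a b x z : A, θ (a * x * b) z = θ x (b * z * a)) :
    ∃ θ' : ((S ⧸ m) ⊗[S] A) ≃ₗ[S ⧸ m] (((S ⧸ m) ⊗[S] A) →ₗ[S ⧸ m] (S ⧸ m)),
      ∀ a b x z : (S ⧸ m) ⊗[S] A, θ' (a * x * b) z = θ' x (b * z * a) :=
  auxMain S (S ⧸ m) A h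
end
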